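/- Let c ∈ ℝⁿ be a unit vector, let ε ∈ (0, 1/2), and let ξ be a random vector in ℝⁿ with ‖ξ‖₂⁴ integrable and 0 < E‖ξ‖₂². Suppose E(‖ξ‖₂² − ⟨c,ξ⟩²) ≤ ε·E‖ξ‖₂² and E‖ξ‖₂⁴ ≤ 3·(E‖ξ‖₂²)². Then the probability of the event {⟨c,ξ⟩² ≥ (1 − 2ε)·‖ξ‖₂²} is at least (ln 2)²/27. -/

import Mathlib

open MeasureTheory

set_option maxHeartbeats 1000000 in
/-- If `c` is a unit vector, `ε ∈ (0,1/2)`, and `ξ` is a random vector with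
`E(‖ξ‖² - ⟨c,ξ⟩²) ≤ ε E‖ξ‖²` and `E‖ξ‖⁴ ≤ 3 (E‖ξ‖²)²`, then
`Pr[⟨c,ξ⟩² ≥ (1-2ε)‖ξ‖²] ≥ (ln 2)²/27`. -/
theorem stmt13 {Ω : Type*} [MeasurableSpace Ω] (μ : Measure Ω) [IsProbabilityMeasure μ]
    (n : ℕ) (c : Fin n → ℝ) (hc : ∑ j, c j ^ 2 = 1)
    (ε : ℝ) (hε0 : 0 < ε) (hε1 : ε < 1 / 2)
    (ξ : Ω → Fin n → ℝ) (hmeas : Measurable ξ)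
    (hint4 : Integrable (fun ω => (∑ j, ξ ω j ^ 2) ^ 2) μ)
    (hint2 : Integrable (fun ω => ∑ j, ξ ω j ^ 2) μ)
    (hintc : Integrable (fun ω => (∑ j, c j * ξ ω j) ^ 2) μ)
    (hpos : 0 < ∫ ω, ∑ j, ξ ω j ^ 2 ∂μ)
    (hcorr : ∫ ω, ((∑ j, ξ ω j ^ 2) - (∑ j, c j * ξ ω j) ^ 2) ∂μ ≤
      ε * ∫ ω, ∑ j, ξ ω j ^ 2 ∂μ)
    (hmom : ∫ ω, (∑ j, ξ ω j ^ 2) ^ 2 ∂μ ≤ 3 * (∫ ω, ∑ j, ξ ω j ^ 2 ∂μ) ^ 2) :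
    Real.log 2 ^ 2 / 27 ≤
      (μ {ω | (1 - 2 * ε) * ∑ j, ξ ω j ^ 2 ≤ (∑ j, c j * ξ ω j) ^ 2}).toReal := by
  set S : Ω → ℝ := fun ω => ∑ j, ξ ω j ^ 2 with hS
  set T : Ω → ℝ := fun ω => (∑ j, c j * ξ ω j) ^ 2 with hT
  have hSnn : ∀ ω, 0 ≤ S ω := fun ω => Finset.sum_nonneg fun j _ => sq_nonneg _
  have hTS : ∀ ω, T ω ≤ S ω := by
    intro ω
    have := Finset.sum_mul_sq_le_sq_mul_sq Finset.univ c (ξ ω)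
    simpa [hS, hT, hc] using this
  -- measurability
  have hmS : Measurable S := by
    apply Finset.measurable_sum
    intro j _
    exact ((measurable_pi_apply j).comp hmeas).pow_const 2
  have hmT : Measurable T := by
    apply Measurable.pow_const
    apply Finset.measurable_sum
    intro j _
    exact ((measurable_pi_apply j).comp hmeas).const_mul (c j)
  set A : Set Ω := {ω | (1 - 2 * ε) * S ω ≤ T ω} with hA
  have hAm : MeasurableSet A := measurableSet_le (hmS.const_mul _) hmT
  set m : ℝ := ∫ ω, S ω ∂μ with hm
  have hm0 : 0 < m := hpos
  have hcorr' : ∫ ω, (S ω - T ω) ∂μ ≤ ε * m := hcorr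
  have hmom' : ∫ ω, S ω ^ 2 ∂μ ≤ 3 * m ^ 2 := hmom
  have hint4' : Integrable (fun ω => S ω ^ 2) μ := hint4
  have hST : Integrable (fun ω => S ω - T ω) μ := hint2.sub hintc
  -- the integral over Aᶜ of S is at most m/2
  have hsplit : (∫ ω in A, (S ω - T ω) ∂μ) + ∫ ω in Aᶜ, (S ω - T ω) ∂μ
      = ∫ ω, (S ω - T ω) ∂μ := integral_add_compl hAm hST
  have h1 : 0 ≤ ∫ ω in A, (S ω - T ω) ∂μ :=
    setIntegral_nonneg hAm fun ω _ => sub_nonneg.2 (hTS ω)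
  have h2 : 2 * ε * ∫ ω in Aᶜ, S ω ∂μ ≤ ∫ ω in Aᶜ, (S ω - T ω) ∂μ := by
    rw [← integral_const_mul]
    refine setIntegral_mono_on ((hint2.const_mul (2 * ε)).integrableOn) hST.integrableOn
      hAm.compl fun ω hω => ?_
    have hlt : ¬ (1 - 2 * ε) * S ω ≤ T ω := hω
    push_neg at hlt
    nlinarith [hSnn ω]
  have hcompl : ∫ ω in Aᶜ, S ω ∂μ ≤ m / 2 := by nlinarith [hsplit, h1, h2]
  have hsplit2 : (∫ ω in A, S ω ∂μ) + ∫ ω in Aᶜ, S ω ∂μ = m :=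
    integral_add_compl hAm hint2
  have hAS : m / 2 ≤ ∫ ω in A, S ω ∂μ := by linarith
  -- truncation bound
  set t : ℝ := 12 * m with ht
  have ht0 : 0 < t := by positivity
  set p : ℝ := (μ A).toReal with hp
  have hbound : ∫ ω in A, S ω ∂μ ≤ t * p + (∫ ω, S ω ^ 2 ∂μ) / t := by
    have hpt : ∀ ω, S ω ≤ t + S ω ^ 2 / t := by
      intro ω
      rcases le_or_gt (S ω) t with h | h
      · have : 0 ≤ S ω ^ 2 / t := by positivity
        linarith
      · have h2 : S ω ≤ S ω ^ 2 / t := by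
          rw [le_div_iff₀ ht0]
          nlinarith
        linarith
    have hintRHS : Integrable (fun ω => t + S ω ^ 2 / t) μ :=
      (integrable_const t).add (hint4'.div_const t)
    calc ∫ ω in A, S ω ∂μ ≤ ∫ ω in A, (t + S ω ^ 2 / t) ∂μ :=
          setIntegral_mono hint2.integrableOn hintRHS.integrableOn fun ω => hpt ω
      _ = (∫ _ in A, t ∂μ) + ∫ ω in A, S ω ^ 2 / t ∂μ :=
          integral_add (integrable_const t).integrableOn (hint4'.div_const t).integrableOn
      _ ≤ t * p + (∫ ω, S ω ^ 2 ∂μ) / t := by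
          have e1 : (∫ _ in A, t ∂μ) = p * t := by
            rw [setIntegral_const, smul_eq_mul, measureReal_def, ← hp]
          have e2 : ∫ ω in A, S ω ^ 2 / t ∂μ = (∫ ω in A, S ω ^ 2 ∂μ) / t := by
            simp_rw [div_eq_mul_inv, integral_mul_const]
          have e3 : ∫ ω in A, S ω ^ 2 ∂μ ≤ ∫ ω, S ω ^ 2 ∂μ :=
            setIntegral_le_integral hint4' (Filter.Eventually.of_forall fun ω => sq_nonneg _)
          have e4 : (∫ ω in A, S ω ^ 2 ∂μ) / t ≤ (∫ ω, S ω ^ 2 ∂μ) / t := by gcongr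
          rw [e1, e2]
          linarith
  have h4 : (∫ ω, S ω ^ 2 ∂μ) / t ≤ m / 4 := by
    rw [div_le_iff₀ ht0]
    nlinarith
  have hp48 : 1 / 48 ≤ p := by nlinarith [hAS, hbound, h4, hm0]
  have hlog : Real.log 2 ^ 2 / 27 ≤ 1 / 48 := by
    nlinarith [Real.log_two_lt_d9, Real.log_nonneg one_le_two]
  show Real.log 2 ^ 2 / 27 ≤ p
  linarith
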